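/- Let G be a connected graph of order n ≥ 2, let H be a connected graph with at least two vertices, and let v be a vertex of H that does not belong to any strong metric basis of H. Then n·dim_s(H) ≤ dim_s(G∘_v H); moreover, if v ∉ ∂(H) then dim_s(G∘_v H) ≤ |∂(H)|(n − 1) + dim_s(H), and if v ∈ ∂(H) then dim_s(G∘_v H) ≤ (|∂(H)| − 1)(n − 1) + dim_s(H). -/

import Mathlib

namespace RootedStrong

variable {V : Type*}

/-- `u` is maximally distant from `v`: every neighbor `w` of `u` satisfies `d(v,w) ≤ d(u,v)`. -/
def MaxDistant (G : SimpleGraph V) (u v : V) : Prop :=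
  ∀ w, G.Adj u w → G.dist v w ≤ G.dist u v

/-- `u` and `v` are mutually maximally distant. -/
def MMD (G : SimpleGraph V) (u v : V) : Prop :=
  MaxDistant G u v ∧ MaxDistant G v u

/-- The boundary `∂(G)` of a graph. -/
def boundary (G : SimpleGraph V) : Set V := {u | ∃ v, MMD G u v}

/-- A vertex is simplicial if its neighborhood induces a complete graph. -/
def Simplicial (G : SimpleGraph V) (u : V) : Prop :=
  ∀ x ∈ G.neighborSet u, ∀ y ∈ G.neighborSet u, x ≠ y → G.Adj x y

/-- The set `σ(G)` of simplicial vertices. -/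
def simplicialSet (G : SimpleGraph V) : Set V := {u | Simplicial G u}

/-- `w` strongly resolves `u` and `v`. -/
def StronglyResolves (G : SimpleGraph V) (w u v : V) : Prop :=
  G.dist w u = G.dist w v + G.dist v u ∨ G.dist w v = G.dist w u + G.dist u v

/-- A set of vertices is a strong metric generator if every pair of distinct vertices is
strongly resolved by some of its elements. -/
def IsStrongGenerator (G : SimpleGraph V) (S : Set V) : Prop :=
  ∀ u v : V, u ≠ v → ∃ w ∈ S, StronglyResolves G w u v

/-- The strong metric dimension of a graph. -/
noncomputable def sdim (G : SimpleGraph V) [Fintype V] : ℕ :=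
  sInf {n | ∃ S : Finset V, S.card = n ∧ IsStrongGenerator G (S : Set V)}

/-- A strong metric basis: a strong metric generator of minimum cardinality. -/
def IsStrongBasis (G : SimpleGraph V) [Fintype V] (S : Finset V) : Prop :=
  IsStrongGenerator G (S : Set V) ∧ S.card = sdim G

/-- The rooted product graph `G ∘_v H`. -/
def rootedProd {α β : Type*} (G : SimpleGraph α) (H : SimpleGraph β) (v : β) :
    SimpleGraph (α × β) where
  Adj p q := (p.1 = q.1 ∧ H.Adj p.2 q.2) ∨ (p.2 = v ∧ q.2 = v ∧ G.Adj p.1 q.1)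
  symm := by
    constructor
    rintro ⟨a, x⟩ ⟨b, y⟩ (⟨h1, h2⟩ | ⟨h1, h2, h3⟩)
    · exact Or.inl ⟨h1.symm, h2.symm⟩
    · exact Or.inr ⟨h2, h1, h3.symm⟩
  loopless := by
    constructor
    rintro ⟨a, x⟩ (⟨_, h2⟩ | ⟨_, _, h3⟩)
    · exact h2.ne rfl
    · exact h3.ne rfl

/-- Two distinct vertices are true twins if they have equal closed neighborhoods. -/
def TrueTwins (G : SimpleGraph V) (x y : V) : Prop :=
  x ≠ y ∧ ∀ z, (z = x ∨ G.Adj x z) ↔ (z = y ∨ G.Adj y z)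

/-- A twin-free clique: a clique containing no pair of true twins. -/
def IsTwinFreeClique (G : SimpleGraph V) (X : Set V) : Prop :=
  (∀ x ∈ X, ∀ y ∈ X, x ≠ y → G.Adj x y) ∧ ∀ x ∈ X, ∀ y ∈ X, ¬ TrueTwins G x y

/-- The twin-free clique number `ϖ(G)`. -/
noncomputable def twinFreeCliqueNum (G : SimpleGraph V) : ℕ :=
  sSup {n | ∃ X : Set V, IsTwinFreeClique G X ∧ X.ncard = n}


set_option linter.unusedSectionVars false

section Dist

variable {α β : Type*} (G : SimpleGraph α) (H : SimpleGraph β) (v : β)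

lemma adj_dist_le {G : SimpleGraph V} {x y : V} (h : G.Adj x y) : G.dist x y ≤ 1 :=
  SimpleGraph.dist_le (SimpleGraph.Walk.cons h SimpleGraph.Walk.nil)

/-- Copy embedding. -/
def homCopy (a : α) : H →g rootedProd G H v :=
  ⟨fun x => (a, x), fun h => Or.inl ⟨rfl, h⟩⟩

/-- Root embedding. -/
def homRoot : G →g rootedProd G H v :=
  ⟨fun a => (a, v), fun h => Or.inr ⟨rfl, rfl, h⟩⟩

open Classical in
/-- The claimed distance function. -/
noncomputable def Dfun (p q : α × β) : ℕ :=
  if p.1 = q.1 then H.dist p.2 q.2 else H.dist p.2 v + G.dist p.1 q.1 + H.dist v q.2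

variable {G H v}

lemma rp_walk (hG : G.Connected) (hH : H.Connected) (p q : α × β) :
    Nonempty ((rootedProd G H v).Walk p q) := by
  obtain ⟨p1⟩ := hH p.2 v
  obtain ⟨pg⟩ := hG p.1 q.1
  obtain ⟨p2⟩ := hH v q.2
  exact ⟨((p1.map (homCopy G H v p.1)).append ((pg.map (homRoot G H v)).append
    (p2.map (homCopy G H v q.1))))⟩

lemma rp_dist_le (hG : G.Connected) (hH : H.Connected) (p q : α × β) :
    (rootedProd G H v).dist p q ≤ Dfun G H v p q := by
  unfold Dfun
  split_ifs with h
  · obtain ⟨w, hw⟩ := (hH p.2 q.2).exists_walk_length_eq_dist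
    have := SimpleGraph.dist_le ((w.map (homCopy G H v p.1)).copy rfl (by rw [h]))
    change (rootedProd G H v).dist p q ≤ _ at this
    simpa [hw] using this
  · obtain ⟨w1, hw1⟩ := (hH p.2 v).exists_walk_length_eq_dist
    obtain ⟨wg, hwg⟩ := (hG p.1 q.1).exists_walk_length_eq_dist
    obtain ⟨w2, hw2⟩ := (hH v q.2).exists_walk_length_eq_dist
    have := SimpleGraph.dist_le ((w1.map (homCopy G H v p.1)).append
      ((wg.map (homRoot G H v)).append (w2.map (homCopy G H v q.1))))
    change (rootedProd G H v).dist p q ≤ _ at this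
    dsimp only [homCopy, homRoot, RelHom.coeFn_mk] at this
    simpa [hw1, hwg, hw2, ← add_assoc] using this

open Classical in
lemma dfun_lipschitz (hG : G.Connected) (hH : H.Connected) {p q : α × β} (r : α × β)
    (h : (rootedProd G H v).Adj p q) : Dfun G H v p r ≤ Dfun G H v q r + 1 := by
  obtain ⟨a, x⟩ := p
  obtain ⟨b, y⟩ := q
  obtain ⟨c, z⟩ := r
  rcases h with ⟨h1, h2⟩ | ⟨h1, h2, h3⟩
  · simp only at h1; subst h1
    have hxy : H.dist x y ≤ 1 := adj_dist_le h2
    unfold Dfun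
    simp only
    split_ifs with h
    · have := hH.dist_triangle (u := x) (v := y) (w := z)
      omega
    · have := hH.dist_triangle (u := x) (v := y) (w := v)
      omega
  · simp only at h1 h2; subst h1; subst h2
    have hab : G.dist a b ≤ 1 := adj_dist_le h3
    unfold Dfun
    simp only
    by_cases hac : a = c
    · subst hac
      have hbc : ¬ b = a := fun hh => G.loopless.irrefl a (hh ▸ h3)
      simp only [if_pos rfl, if_true, eq_self_iff_true, if_neg hbc, SimpleGraph.dist_self]
      have : G.dist b a ≤ 1 := adj_dist_le h3.symm
      omega
    · by_cases hbc : b = c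
      · subst hbc
        simp only [if_neg hac, if_pos rfl, if_true, eq_self_iff_true, SimpleGraph.dist_self]
        omega
      · simp only [if_neg hac, if_neg hbc, SimpleGraph.dist_self]
        have := hG.dist_triangle (u := a) (v := b) (w := c)
        omega

lemma dfun_le_length (hG : G.Connected) (hH : H.Connected) {p q : α × β}
    (w : (rootedProd G H v).Walk p q) : Dfun G H v p q ≤ w.length := by
  induction w with
  | nil => simp [Dfun]
  | @cons u u' u'' h w ih =>
      have := dfun_lipschitz hG hH u'' h
      simp only [SimpleGraph.Walk.length_cons]
      omega

theorem rp_dist (hG : G.Connected) (hH : H.Connected) (p q : α × β) :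
    (rootedProd G H v).dist p q = Dfun G H v p q := by
  refine le_antisymm (rp_dist_le hG hH p q) ?_
  obtain ⟨w⟩ := rp_walk (v := v) hG hH p q
  obtain ⟨w', hw'⟩ := SimpleGraph.Reachable.exists_walk_length_eq_dist ⟨w⟩
  rw [← hw']
  exact dfun_le_length hG hH w'

end Dist

section Boundary

variable [Fintype V] {G : SimpleGraph V}

lemma exists_maxdist (hG : G.Connected) (x y : V) :
    ∃ u : V, G.dist u y = G.dist u x + G.dist x y ∧ MaxDistant G u y := by
  classical
  obtain ⟨u, hu, hmax⟩ := Finset.exists_max_image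
    (Finset.univ.filter fun u => G.dist u y = G.dist u x + G.dist x y)
    (fun u => G.dist u y)
    ⟨x, by simp [SimpleGraph.dist_self]⟩
  simp only [Finset.mem_filter, Finset.mem_univ, true_and] at hu
  refine ⟨u, hu, fun w hw => ?_⟩
  by_contra hcon
  push_neg at hcon
  have c1 : G.dist y w = G.dist w y := SimpleGraph.dist_comm
  have c2 : G.dist y u = G.dist u y := SimpleGraph.dist_comm
  have c3 : G.dist u w = G.dist w u := SimpleGraph.dist_comm
  have hadj : G.dist u w ≤ 1 := adj_dist_le hw
  have h1 : G.dist y w ≤ G.dist y u + G.dist u w := hG.dist_triangle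
  have h3 : G.dist w y ≤ G.dist w x + G.dist x y := hG.dist_triangle
  have h4 : G.dist w x ≤ G.dist w u + G.dist u x := hG.dist_triangle
  have hmem : G.dist w y = G.dist w x + G.dist x y := by omega
  have := hmax w (by simp [hmem])
  omega

lemma exists_boundary_resolve (hG : G.Connected) (x y : V) :
    ∃ u ∈ boundary G, G.dist u y = G.dist u x + G.dist x y := by
  obtain ⟨u, hu1, hu2⟩ := exists_maxdist hG x y
  obtain ⟨z, hz1, hz2⟩ := exists_maxdist hG y u
  refine ⟨u, ⟨z, ?_, hz2⟩, hu1⟩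
  intro w hw
  calc G.dist z w ≤ G.dist z y + G.dist y w := hG.dist_triangle
    _ ≤ G.dist z y + G.dist u y := by have := hu2 w hw; omega
    _ = G.dist z u := by rw [hz1, SimpleGraph.dist_comm (u := u) (v := y)]
    _ = G.dist u z := SimpleGraph.dist_comm

end Boundary

section Sdim

variable [Fintype V] {G : SimpleGraph V}

lemma univ_generator (G : SimpleGraph V) : IsStrongGenerator G (Finset.univ : Finset V) := by
  intro u w _
  exact ⟨w, by simp, Or.inl (by simp [SimpleGraph.dist_self])⟩

lemma sdim_set_nonempty (G : SimpleGraph V) :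
    {n | ∃ S : Finset V, S.card = n ∧ IsStrongGenerator G (S : Set V)}.Nonempty :=
  ⟨Finset.univ.card, Finset.univ, rfl, univ_generator G⟩

lemma sdim_exists (G : SimpleGraph V) :
    ∃ S : Finset V, S.card = sdim G ∧ IsStrongGenerator G (S : Set V) :=
  Nat.sInf_mem (sdim_set_nonempty G)

lemma sdim_le {S : Finset V} (hS : IsStrongGenerator G (S : Set V)) : sdim G ≤ S.card :=
  Nat.sInf_le ⟨S, rfl, hS⟩

lemma sdim_pos (h2 : 2 ≤ Fintype.card V) : 1 ≤ sdim G := by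
  by_contra h
  push_neg at h
  interval_cases h' : sdim G
  · obtain ⟨S, hcard, hgen⟩ := sdim_exists G
    rw [h'] at hcard
    rw [Finset.card_eq_zero] at hcard
    obtain ⟨x, y, hxy⟩ := Fintype.exists_pair_of_one_lt_card (α := V) (by omega)
    obtain ⟨w, hw, -⟩ := hgen x y hxy
    simp [hcard] at hw

end Sdim

section Main

variable {α β : Type*} [Fintype α] [Fintype β] {G : SimpleGraph α} {H : SimpleGraph β} {v : β}

lemma dsame (hG : G.Connected) (hH : H.Connected) {a : α} {x y : β} :
    (rootedProd G H v).dist (a, x) (a, y) = H.dist x y := by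
  rw [rp_dist hG hH]; simp [Dfun]

lemma dcross (hG : G.Connected) (hH : H.Connected) {a b : α} {x y : β} (h : a ≠ b) :
    (rootedProd G H v).dist (a, x) (b, y) = H.dist x v + G.dist a b + H.dist v y := by
  rw [rp_dist hG hH]; simp [Dfun, h]

lemma lower_bound (hG : G.Connected) (hH : H.Connected)
    (hv : ∀ S : Finset β, IsStrongBasis H S → v ∉ S) :
    Fintype.card α * sdim H ≤ sdim (rootedProd G H v) := by
  classical
  obtain ⟨S, hScard, hSgen⟩ := sdim_exists (rootedProd G H v)
  have key : ∀ a : α, sdim H ≤ (S.filter (fun p => p.1 = a)).card := by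
    intro a
    set T : Finset β := (S.filter (fun p => p.1 = a)).image Prod.snd with hT
    have hTcard : T.card = (S.filter (fun p => p.1 = a)).card := by
      apply Finset.card_image_of_injOn
      intro p hp q hq hpq
      simp only [Finset.mem_coe, Finset.mem_filter] at hp hq
      exact Prod.ext (hp.2.trans hq.2.symm) hpq
    have hgen : IsStrongGenerator H ((insert v T : Finset β) : Set β) := by
      intro x y hxy
      obtain ⟨w, hwS, hres⟩ := hSgen (a, x) (a, y) (by simp [hxy])
      obtain ⟨b, z⟩ := w
      simp only [Finset.mem_coe] at hwS
      by_cases hba : b = a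
      · subst hba
        refine ⟨z, ?_, ?_⟩
        · simp only [Finset.coe_insert, Set.mem_insert_iff]
          refine Or.inr (Finset.mem_coe.mpr ?_)
          rw [hT]
          exact Finset.mem_image.mpr ⟨(b, z), Finset.mem_filter.mpr ⟨hwS, rfl⟩, rfl⟩
        · unfold StronglyResolves at hres ⊢
          simp only [dsame hG hH] at hres
          exact hres
      · refine ⟨v, by simp, ?_⟩
        unfold StronglyResolves at hres ⊢
        rw [dcross hG hH hba, dcross hG hH hba, dsame hG hH, dsame hG hH] at hres
        rcases hres with h | h
        · left; omega
        · right; omega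
    by_contra hlt
    push_neg at hlt
    rw [← hTcard] at hlt
    have h5 : sdim H ≤ (insert v T).card := sdim_le hgen
    have h6 : (insert v T).card ≤ T.card + 1 := Finset.card_insert_le v T
    have h7 : (insert v T).card = sdim H := le_antisymm (by omega) h5
    exact hv _ ⟨hgen, h7⟩ (Finset.mem_insert_self v T)
  have hsum := Finset.card_eq_sum_card_fiberwise
    (s := S) (t := (Finset.univ : Finset α)) (f := Prod.fst) (fun x _ => Finset.mem_univ _)
  calc Fintype.card α * sdim H = ∑ _a : α, sdim H := by
        simp [Finset.sum_const, Finset.card_univ]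
    _ ≤ ∑ a : α, (S.filter (fun p => p.1 = a)).card :=
        Finset.sum_le_sum (fun a _ => key a)
    _ = S.card := by rw [hsum]
    _ = sdim (rootedProd G H v) := hScard

lemma upper_bound (hG : G.Connected) (hH : H.Connected)
    (h2 : 2 ≤ Fintype.card α) (h2b : 2 ≤ Fintype.card β)
    (hv : ∀ S : Finset β, IsStrongBasis H S → v ∉ S) :
    sdim (rootedProd G H v) ≤
      sdim H + (Fintype.card α - 1) * ((boundary H) \ {v}).toFinite.toFinset.card := by
  classical
  obtain ⟨W, hWcard, hWgen⟩ := sdim_exists H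
  have hWne : W.Nonempty := Finset.card_pos.mp (by rw [hWcard]; exact sdim_pos h2b)
  obtain ⟨w₀, hw₀⟩ := hWne
  have : Nontrivial β := Fintype.one_lt_card_iff_nontrivial.mp (by omega)
  have : Nonempty α := Fintype.card_pos_iff.mp (by omega)
  obtain ⟨a₀⟩ := this
  set Bf : Finset β := ((boundary H) \ {v}).toFinite.toFinset with hBf
  have hBfmem : ∀ u, u ∈ Bf ↔ u ∈ boundary H ∧ u ≠ v := by
    intro u; rw [hBf, Set.Finite.mem_toFinset]; simp
  -- useful: u ≠ v whenever d u v = d u x + d x v and x ≠ v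
  have hne_of : ∀ x u : β, x ≠ v → H.dist u v = H.dist u x + H.dist x v → u ≠ v := by
    intro x u hx hu hcon
    subst hcon
    rw [SimpleGraph.dist_self] at hu
    have := hH.pos_dist_of_ne hx
    omega
  -- b₀ : a boundary vertex different from v
  obtain ⟨x₁, hx₁⟩ := exists_ne v
  obtain ⟨b₀, hb₀B, hb₀⟩ := exists_boundary_resolve hH x₁ v
  have hb₀Bf : b₀ ∈ Bf := (hBfmem b₀).mpr ⟨hb₀B, hne_of x₁ b₀ hx₁ hb₀⟩
  set S : Finset (α × β) := ({a₀} ×ˢ W) ∪ ((Finset.univ.erase a₀) ×ˢ Bf) with hS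
  have hSmem : ∀ p : α × β, p ∈ S ↔ (p.1 = a₀ ∧ p.2 ∈ W) ∨ (p.1 ≠ a₀ ∧ p.2 ∈ Bf) := by
    intro p
    rw [hS]
    simp only [Finset.mem_union, Finset.mem_product, Finset.mem_singleton, Finset.mem_erase,
      Finset.mem_univ, and_true]
  have hmem : ∀ p : α × β, ((p.1 = a₀ ∧ p.2 ∈ W) ∨ (p.1 ≠ a₀ ∧ p.2 ∈ Bf)) →
      p ∈ (S : Set (α × β)) := fun p h => Finset.mem_coe.mpr ((hSmem p).mpr h)
  have hgen : IsStrongGenerator (rootedProd G H v) (S : Set (α × β)) := by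
    rintro ⟨a, x⟩ ⟨b, y⟩ hne
    by_cases hab : a = b
    · subst hab
      have hxy : x ≠ y := fun h => hne (by rw [h])
      by_cases ha : a = a₀
      · obtain ⟨w, hwW, hres⟩ := hWgen x y hxy
        refine ⟨(a, w), hmem _ (Or.inl ⟨ha, Finset.mem_coe.mp hwW⟩), ?_⟩
        unfold StronglyResolves at hres ⊢
        simp only [dsame hG hH]
        exact hres
      · obtain ⟨u, huB, hu⟩ := exists_boundary_resolve hH x y
        by_cases huv : u = v
        · subst huv
          refine ⟨(a₀, w₀), hmem _ (Or.inl ⟨rfl, hw₀⟩), Or.inr ?_⟩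
          rw [dcross hG hH (Ne.symm ha), dcross hG hH (Ne.symm ha), dsame hG hH]
          omega
        · refine ⟨(a, u), hmem _ (Or.inr ⟨ha, (hBfmem u).mpr ⟨huB, huv⟩⟩), Or.inr ?_⟩
          simp only [dsame hG hH]
          exact hu
    · by_cases hxv : x = v
      · subst hxv
        by_cases ha : a = a₀
        · refine ⟨(a, w₀), hmem _ (Or.inl ⟨ha, hw₀⟩), Or.inr ?_⟩
          rw [dcross hG hH hab, dsame hG hH, dcross hG hH hab, SimpleGraph.dist_self]
          omega
        · refine ⟨(a, b₀), hmem _ (Or.inr ⟨ha, hb₀Bf⟩), Or.inr ?_⟩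
          rw [dcross hG hH hab, dsame hG hH, dcross hG hH hab, SimpleGraph.dist_self]
          omega
      · by_cases hyv : y = v
        · subst hyv
          by_cases hb : b = a₀
          · refine ⟨(b, w₀), hmem _ (Or.inl ⟨hb, hw₀⟩), Or.inl ?_⟩
            rw [dcross hG hH (Ne.symm hab), dsame hG hH, dcross hG hH (Ne.symm hab),
              SimpleGraph.dist_self]
            omega
          · refine ⟨(b, b₀), hmem _ (Or.inr ⟨hb, hb₀Bf⟩), Or.inl ?_⟩
            rw [dcross hG hH (Ne.symm hab), dsame hG hH, dcross hG hH (Ne.symm hab),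
              SimpleGraph.dist_self]
            omega
        · by_cases ha : a = a₀
          · have hb : b ≠ a₀ := fun hcon => hab (ha.trans hcon.symm)
            obtain ⟨u, huB, hu⟩ := exists_boundary_resolve hH y v
            have huv : u ≠ v := hne_of y u hyv hu
            refine ⟨(b, u), hmem _ (Or.inr ⟨hb, (hBfmem u).mpr ⟨huB, huv⟩⟩), Or.inl ?_⟩
            rw [dcross hG hH (Ne.symm hab), dsame hG hH, dcross hG hH (Ne.symm hab)]
            omega
          · obtain ⟨u, huB, hu⟩ := exists_boundary_resolve hH x v
            have huv : u ≠ v := hne_of x u hxv hu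
            refine ⟨(a, u), hmem _ (Or.inr ⟨ha, (hBfmem u).mpr ⟨huB, huv⟩⟩), Or.inr ?_⟩
            rw [dcross hG hH hab, dsame hG hH, dcross hG hH hab]
            omega
  have hcard : S.card ≤ sdim H + (Fintype.card α - 1) * Bf.card := by
    refine le_trans (Finset.card_union_le _ _) ?_
    rw [Finset.card_product, Finset.card_product, Finset.card_singleton, one_mul,
      Finset.card_erase_of_mem (Finset.mem_univ a₀), Finset.card_univ, hWcard]
  exact le_trans (sdim_le hgen) hcard

end Main

theorem statement17 {α β : Type*} [Fintype α] [Fintype β]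
    (G : SimpleGraph α) (H : SimpleGraph β)
    (hG : G.Connected) (hH : H.Connected)
    {n : ℕ} (hn : Fintype.card α = n) (h2 : 2 ≤ n) (h2b : 2 ≤ Fintype.card β)
    (v : β) (hv : ∀ S : Finset β, IsStrongBasis H S → v ∉ S) :
    n * sdim H ≤ sdim (rootedProd G H v) ∧
    (v ∉ boundary H →
      (sdim (rootedProd G H v) : ℤ) ≤
        ((boundary H).ncard : ℤ) * ((n : ℤ) - 1) + sdim H) ∧
    (v ∈ boundary H →
      (sdim (rootedProd G H v) : ℤ) ≤
        (((boundary H).ncard : ℤ) - 1) * ((n : ℤ) - 1) + sdim H) := by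
  subst hn
  have hub := upper_bound hG hH h2 h2b hv
  have hBc : ((boundary H) \ {v}).toFinite.toFinset.card = ((boundary H) \ {v}).ncard :=
    (Set.ncard_eq_toFinset_card _ _).symm
  rw [hBc] at hub
  refine ⟨lower_bound hG hH hv, ?_, ?_⟩
  · intro hvB
    rw [Set.diff_singleton_eq_self hvB] at hub
    have h1 : (1 : ℕ) ≤ Fintype.card α := by omega
    have := (Nat.cast_le (α := ℤ)).mpr hub
    push_cast [Nat.cast_sub h1] at this
    nlinarith [this]
  · intro hvB
    rw [Set.ncard_diff_singleton_of_mem hvB] at hub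
    have hpos : 1 ≤ (boundary H).ncard :=
      (Set.ncard_pos (Set.toFinite _)).mpr ⟨v, hvB⟩
    have h1 : (1 : ℕ) ≤ Fintype.card α := by omega
    have := (Nat.cast_le (α := ℤ)).mpr hub
    push_cast [Nat.cast_sub h1, Nat.cast_sub hpos] at this
    nlinarith [this]


end RootedStrong
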